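/- The Rees quotient E/I_κ from the previous construction is topologically isomorphic to the orthogonal sum of λ-many copies of the discrete semilattice (ℕ, max) with an isolated zero adjoined: i.e., the discrete semilattice on {0} ∪ ((ℕ \ F) × (λ \ κ)) where (n,a)·(m,a) = (max(n,m), a) and (n,a)·(m,b) = 0 for a ≠ b; this discrete semilattice is not 𝓗-complete. -/

import Mathlib

open Topology Set

/-- A filter is free if the intersection of all its members is empty. -/
def FreeF (F : Filter ℕ) : Prop := ⋂₀ F.sets = ∅

/-- The topology on ℕ_ℱ = ℕ ∪ {ℱ} (modelled as `Option ℕ`, with `none` the point ℱ):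
all points of ℕ are isolated, and the sets F ∪ {ℱ}, F ∈ ℱ, form a neighbourhood base at ℱ. -/
def nfTop (F : Filter ℕ) : TopologicalSpace (Option ℕ) where
  IsOpen U := none ∈ U → {n : ℕ | some n ∈ U} ∈ F
  isOpen_univ := fun _ => by simp
  isOpen_inter := fun U V hU hV h => Filter.inter_mem (hU h.1) (hV h.2)
  isOpen_sUnion := fun S hS h => by
    obtain ⟨U, hUS, hnU⟩ := h
    exact Filter.mem_of_superset (hS U hUS hnU) fun n hn => ⟨U, hUS, hn⟩

/-- min on ℕ extended to ℕ_ℱ by min(n,ℱ) = n, min(ℱ,ℱ) = ℱ. -/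
def minOp : Option ℕ → Option ℕ → Option ℕ
  | none, y => y
  | some a, none => some a
  | some a, some b => some (min a b)

/-- max on ℕ extended to ℕ_ℱ by max(n,ℱ) = ℱ = max(ℱ,ℱ). -/
def maxOp : Option ℕ → Option ℕ → Option ℕ
  | none, _ => none
  | _, none => none
  | some a, some b => some (max a b)

/-- `X` with operation `op` is a (Hausdorff) topological semilattice. -/
structure IsTopSemilattice (X : Type*) [TopologicalSpace X] (op : X → X → X) : Prop where
  t2 : T2Space X
  comm : ∀ a b, op a b = op b a
  idem : ∀ a, op a a = a
  assoc : ∀ a b c, op (op a b) c = op a (op b c)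
  cont : Continuous fun p : X × X => op p.1 p.2

/-- 𝓗-completeness: the image under any topological embedding which is a semilattice
homomorphism into a Hausdorff topological semilattice is closed. -/
def HComplete (X : Type*) [TopologicalSpace X] (op : X → X → X) : Prop :=
  ∀ (Y : Type*) [TopologicalSpace Y] (opY : Y → Y → Y), IsTopSemilattice Y opY →
    ∀ f : X → Y, Topology.IsEmbedding f →
      (∀ a b, f (op a b) = opY (f a) (f b)) → IsClosed (Set.range f)

/-- 𝓐𝓗-completeness: the image under any continuous semilattice homomorphism
into a Hausdorff topological semilattice is closed. -/
def AHComplete (X : Type*) [TopologicalSpace X] (op : X → X → X) : Prop :=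
  ∀ (Y : Type*) [TopologicalSpace Y] (opY : Y → Y → Y), IsTopSemilattice Y opY →
    ∀ f : X → Y, Continuous f →
      (∀ a b, f (op a b) = opY (f a) (f b)) → IsClosed (Set.range f)

-- The semilattice operation of E_λ = {0} ∪ λ (modelled as `Option L`, `none` the zero):
-- x·y = x if x = y and x·y = 0 otherwise.
open Classical in
noncomputable def eOp {L : Type*} (x y : Option L) : Option L := if x = y then x else none

/-- The product topology on ℕ_{ℱ,max} × E_λ (E_λ discrete). -/
def prodTopL (F : Filter ℕ) (L : Type*) : TopologicalSpace (Option ℕ × Option L) :=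
  @instTopologicalSpaceProd _ _ (nfTop F) ⊥

/-- The coordinatewise operation on ℕ_{ℱ,max} × E_λ. -/
noncomputable def pOpL {L : Type*} (p q : Option ℕ × Option L) : Option ℕ × Option L :=
  (maxOp p.1 q.1, eOp p.2 q.2)

/-- The subset E = (ℕ_{ℱ,max} × {0}) ∪ ((ℕ \ F) × λ) of ℕ_{ℱ,max} × E_λ. -/
def EsetL (Fs : Set ℕ) (L : Type*) : Set (Option ℕ × Option L) :=
  (Set.univ ×ˢ {none}) ∪ ((some '' Fsᶜ) ×ˢ (some '' Set.univ))

/-- The ideal I_κ = (ℕ_{ℱ,max} × {0}) ∪ ((ℕ \ F) × κ) for κ ⊆ λ. -/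
def IsetL (Fs : Set ℕ) {L : Type*} (κ : Set L) : Set (Option ℕ × Option L) :=
  (Set.univ ×ˢ {none}) ∪ ((some '' Fsᶜ) ×ˢ (some '' κ))

/-- The subspace topology on E ⊆ ℕ_{ℱ,max} × E_λ. -/
def subTopL (F : Filter ℕ) (Fs : Set ℕ) (L : Type*) : TopologicalSpace (EsetL Fs L) :=
  @instTopologicalSpaceSubtype _ _ (prodTopL F L)

/-- The Rees congruence on E identifying all points of the ideal I_κ. -/
def reesSetoidL (Fs : Set ℕ) {L : Type*} (κ : Set L) : Setoid (EsetL Fs L) where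
  r a b := a = b ∨ ((a : Option ℕ × Option L) ∈ IsetL Fs κ ∧
    (b : Option ℕ × Option L) ∈ IsetL Fs κ)
  iseqv := by
    refine ⟨fun _ => Or.inl rfl, ?_, ?_⟩
    · rintro a b (rfl | h)
      · exact Or.inl rfl
      · exact Or.inr ⟨h.2, h.1⟩
    · rintro a b c (rfl | h1) h2
      · exact h2
      · rcases h2 with rfl | h2
        · exact Or.inr h1
        · exact Or.inr ⟨h1.1, h2.2⟩

/-- The quotient topology on the Rees quotient E/I_κ. -/
def qTopL (F : Filter ℕ) (Fs : Set ℕ) {L : Type*} (κ : Set L) :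
    TopologicalSpace (Quotient (reesSetoidL Fs κ)) :=
  (subTopL F Fs L).coinduced (Quotient.mk (reesSetoidL Fs κ))

-- The orthogonal sum of (λ \ κ)-many copies of (ℕ \ F, max) with a zero adjoined,
-- modelled as `Option ({n // n ∈ Fsᶜ} × {a // a ∉ κ})` with `none` the zero:
-- (n,a)·(m,a) = (max n m, a) and (n,a)·(m,b) = 0 for a ≠ b.
open Classical in
noncomputable def osOp (Fs : Set ℕ) {L : Type*} (κ : Set L) :
    Option ({n : ℕ // n ∈ Fsᶜ} × {a : L // a ∉ κ}) →
    Option ({n : ℕ // n ∈ Fsᶜ} × {a : L // a ∉ κ}) →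
    Option ({n : ℕ // n ∈ Fsᶜ} × {a : L // a ∉ κ})
  | some p, some q =>
      if p.2 = q.2 then some (if p.1.1 ≤ q.1.1 then q.1 else p.1, p.2) else none
  | _, _ => none

section St18Aux
open Classical

lemma st18_max_mem {Fs : Set ℕ} {n m : ℕ} (hn : n ∈ Fsᶜ) (hm : m ∈ Fsᶜ) :
    max n m ∈ Fsᶜ := by
  rcases max_choice n m with h | h <;> rw [h] <;> assumption

lemma st18_ifmax {Fs : Set ℕ} (p q : {n : ℕ // n ∈ Fsᶜ}) :
    (if (p : ℕ) ≤ (q : ℕ) then q else p)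
      = (⟨max p.1 q.1, st18_max_mem p.2 q.2⟩ : {n : ℕ // n ∈ Fsᶜ}) := by
  split_ifs with h
  · exact Subtype.ext (max_eq_right h).symm
  · exact Subtype.ext (max_eq_left (le_of_not_ge h)).symm

variable {L : Type*} {Fs : Set ℕ} {κ : Set L}

lemma osOp_none_left (x) : osOp Fs κ none x = none := by cases x <;> rfl

lemma osOp_none_right (x) : osOp Fs κ x none = none := by cases x <;> rfl

lemma osOp_some_some (p q : {n : ℕ // n ∈ Fsᶜ} × {a : L // a ∉ κ}) :
    osOp Fs κ (some p) (some q) =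
      if p.2 = q.2 then
        some ((⟨max p.1.1 q.1.1, st18_max_mem p.1.2 q.1.2⟩ : {n : ℕ // n ∈ Fsᶜ}), p.2)
      else none := by
  show (if p.2 = q.2 then some (if p.1.1 ≤ q.1.1 then q.1 else p.1, p.2) else none) = _
  rw [st18_ifmax p.1 q.1]

lemma osOp_comm (x y) : osOp Fs κ x y = osOp Fs κ y x := by
  cases x with
  | none => rw [osOp_none_left, osOp_none_right]
  | some p =>
    cases y with
    | none => rw [osOp_none_left, osOp_none_right]
    | some q =>
      rw [osOp_some_some, osOp_some_some]
      by_cases h : p.2 = q.2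
      · rw [if_pos h, if_pos h.symm, h]
        exact congrArg some (Prod.ext (Subtype.ext (max_comm _ _)) rfl)
      · rw [if_neg h, if_neg fun hh => h hh.symm]

lemma osOp_idem (x) : osOp Fs κ x x = x := by
  cases x with
  | none => rfl
  | some p =>
    rw [osOp_some_some, if_pos rfl]
    exact congrArg some (Prod.ext (Subtype.ext (max_self _)) rfl)

lemma osOp_assoc (x y z) :
    osOp Fs κ (osOp Fs κ x y) z = osOp Fs κ x (osOp Fs κ y z) := by
  cases x with
  | none => rw [osOp_none_left, osOp_none_left, osOp_none_left]
  | some p =>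
    cases y with
    | none => simp only [osOp_none_right, osOp_none_left]
    | some q =>
      cases z with
      | none => rw [osOp_none_right, osOp_none_right, osOp_none_right]
      | some r =>
        by_cases h1 : p.2 = q.2
        · rw [osOp_some_some p q, if_pos h1]
          by_cases h2 : q.2 = r.2
          · rw [osOp_some_some q r, if_pos h2, osOp_some_some, osOp_some_some,
              if_pos (h1.trans h2), if_pos h1]
            exact congrArg some (Prod.ext (Subtype.ext (max_assoc _ _ _)) rfl)
          · rw [osOp_some_some q r, if_neg h2, osOp_none_right, osOp_some_some,
              if_neg fun hh => h2 (h1.symm.trans hh)]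
        · rw [osOp_some_some p q, if_neg h1, osOp_none_left]
          by_cases h2 : q.2 = r.2
          · rw [osOp_some_some q r, if_pos h2, osOp_some_some,
              if_neg (by simpa using h1)]
          · rw [osOp_some_some q r, if_neg h2, osOp_none_right]

end St18Aux
section St18B
open Classical

open Classical in
noncomputable def fAux (Fs : Set ℕ) {L : Type*} (κ : Set L) :
    Option ℕ × Option L → Option ({n : ℕ // n ∈ Fsᶜ} × {a : L // a ∉ κ})
  | (some n, some a) => if h : n ∈ Fsᶜ ∧ a ∉ κ then some (⟨n, h.1⟩, ⟨a, h.2⟩) else none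
  | _ => none

variable {L : Type*} {Fs : Set ℕ} {κ : Set L}

lemma fAux_snd_none (x : Option ℕ) : fAux Fs κ (x, none) = none := by cases x <;> rfl

lemma fAux_fst_none (y : Option L) : fAux Fs κ (none, y) = none := by cases y <;> rfl

lemma fAux_some_some (n : ℕ) (a : L) :
    fAux Fs κ (some n, some a)
      = if h : n ∈ Fsᶜ ∧ a ∉ κ then some (⟨n, h.1⟩, ⟨a, h.2⟩) else none := rfl

lemma st18_mem_E_cases {p : Option ℕ × Option L} (hp : p ∈ EsetL Fs L) :
    p.2 = none ∨ ∃ n a, n ∈ Fsᶜ ∧ p = (some n, some a) := by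
  rcases hp with h | h
  · exact Or.inl h.2
  · obtain ⟨n, hn, h1⟩ := h.1
    obtain ⟨a, -, h2⟩ := h.2
    exact Or.inr ⟨n, a, hn, Prod.ext h1.symm h2.symm⟩

lemma st18_mem_I_snd_none {p : Option ℕ × Option L} (h : p.2 = none) :
    p ∈ IsetL Fs κ := Or.inl ⟨Set.mem_univ _, h⟩

lemma st18_mem_I_some {n : ℕ} {a : L} (hn : n ∈ Fsᶜ) (ha : a ∈ κ) :
    (some n, some a) ∈ IsetL Fs κ := Or.inr ⟨⟨n, hn, rfl⟩, ⟨a, ha, rfl⟩⟩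

lemma fAux_eq_none_iff {p : Option ℕ × Option L} (hp : p ∈ EsetL Fs L) :
    fAux Fs κ p = none ↔ p ∈ IsetL Fs κ := by
  rcases st18_mem_E_cases hp with h | ⟨n, a, hn, rfl⟩
  · obtain ⟨x, y⟩ := p
    simp only at h; subst h
    simp [fAux_snd_none, st18_mem_I_snd_none (p := (x, none)) rfl]
  · rw [fAux_some_some]
    constructor
    · intro h
      by_cases hc : n ∈ Fsᶜ ∧ a ∉ κ
      · rw [dif_pos hc] at h; exact absurd h (by simp)
      · have ha : a ∈ κ := by
          by_contra hana
          exact hc ⟨hn, hana⟩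
        exact st18_mem_I_some hn ha
    · rintro (h | h)
      · exact absurd h.2 (by simp)
      · obtain ⟨b, hb, hba⟩ := h.2
        have : a ∈ κ := by
          have : b = a := Option.some_injective _ hba
          rwa [this] at hb
        rw [dif_neg (by tauto)]

lemma st18_eOp_none_left (y : Option L) : eOp none y = none := by
  unfold eOp; split <;> rfl

lemma st18_eOp_none_right (x : Option L) : eOp x none = none := by
  unfold eOp; split <;> simp_all

lemma st18_pOpL_comm (p q : Option ℕ × Option L) : pOpL p q = pOpL q p := by
  unfold pOpL
  congr 1
  · show maxOp p.1 q.1 = maxOp q.1 p.1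
    rcases p.1 with _ | n <;> rcases q.1 with _ | m <;> simp [maxOp, max_comm]
  · show eOp p.2 q.2 = eOp q.2 p.2
    unfold eOp
    by_cases h : p.2 = q.2
    · simp [h]
    · rw [if_neg h, if_neg fun hh => h hh.symm]

lemma st18_pOpL_mem_I {p q : Option ℕ × Option L} (hq : q ∈ EsetL Fs L)
    (hpI : p ∈ IsetL Fs κ) : pOpL p q ∈ IsetL Fs κ := by
  rcases hpI with h | h
  · apply st18_mem_I_snd_none
    show eOp p.2 q.2 = none
    rw [h.2, st18_eOp_none_left]
  · obtain ⟨n, hn, h1⟩ := h.1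
    obtain ⟨a, ha, h2⟩ := h.2
    by_cases hqa : q.2 = some a
    · rcases st18_mem_E_cases hq with h' | ⟨m, b, hm, hq'⟩
      · rw [h'] at hqa; exact absurd hqa.symm (by simp)
      · have hba : b = a := by
          rw [hq'] at hqa; exact Option.some_injective _ (by simpa using hqa)
        have : pOpL p q = (some (max n m), some a) := by
          unfold pOpL
          rw [hq', ← h1, ← h2]
          simp only [maxOp, eOp]
          rw [if_pos (by rw [hba])]
        rw [this]
        exact st18_mem_I_some (st18_max_mem hn hm) ha
    · apply st18_mem_I_snd_none
      show eOp p.2 q.2 = none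
      rw [← h2]
      unfold eOp
      rw [if_neg fun hh => hqa (by rw [← hh])]

lemma st18_pOpL_mem_I' {p q : Option ℕ × Option L} (hp : p ∈ EsetL Fs L)
    (hqI : q ∈ IsetL Fs κ) : pOpL p q ∈ IsetL Fs κ := by
  rw [st18_pOpL_comm]; exact st18_pOpL_mem_I hp hqI

lemma fAux_hom {p q : Option ℕ × Option L} (hp : p ∈ EsetL Fs L) (hq : q ∈ EsetL Fs L) :
    fAux Fs κ (pOpL p q) = osOp Fs κ (fAux Fs κ p) (fAux Fs κ q) := by
  rcases st18_mem_E_cases hp with h | ⟨n, a, hn, hp'⟩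
  · obtain ⟨x, y⟩ := p
    simp only at h; subst h
    have h1 : pOpL (x, none) q = (maxOp x q.1, none) := by
      unfold pOpL; rw [st18_eOp_none_left]
    rw [h1, fAux_snd_none, fAux_snd_none, osOp_none_left]
  · subst hp'
    rcases st18_mem_E_cases hq with h | ⟨m, b, hm, hq'⟩
    · obtain ⟨x, y⟩ := q
      simp only at h; subst h
      have h1 : pOpL (some n, some a) (x, none) = (maxOp (some n) x, none) := by
        unfold pOpL; rw [st18_eOp_none_right]
      rw [h1, fAux_snd_none, fAux_snd_none, osOp_none_right]
    · subst hq'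
      by_cases hab : a = b
      · subst hab
        have h1 : pOpL (some n, some a) (some m, some a) = (some (max n m), some a) := by
          unfold pOpL; simp [maxOp, eOp]
        rw [h1, fAux_some_some, fAux_some_some, fAux_some_some]
        by_cases haκ : a ∈ κ
        · rw [dif_neg (by tauto), dif_neg (by tauto), dif_neg (by tauto), osOp_none_left]
        · rw [dif_pos ⟨st18_max_mem hn hm, haκ⟩, dif_pos ⟨hn, haκ⟩, dif_pos ⟨hm, haκ⟩,
            osOp_some_some, if_pos rfl]
      · have h1 : pOpL (some n, some a) (some m, some b) = (some (max n m), none) := by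
          unfold pOpL
          simp only [maxOp, eOp]
          rw [if_neg (by simpa using hab)]
        rw [h1, fAux_snd_none, fAux_some_some, fAux_some_some]
        by_cases h2 : n ∈ Fsᶜ ∧ a ∉ κ
        · rw [dif_pos h2]
          by_cases h3 : m ∈ Fsᶜ ∧ b ∉ κ
          · rw [dif_pos h3, osOp_some_some,
              if_neg (by intro hh; exact hab (congrArg Subtype.val hh))]
          · rw [dif_neg h3, osOp_none_right]
        · rw [dif_neg h2, osOp_none_left]

end St18B
section St18C
open Classical

lemma st18_nfTop_isOpen_of_not_none {U : Set (Option ℕ)} (F : Filter ℕ) (h : none ∉ U) :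
    (nfTop F).IsOpen U := fun hU => absurd hU h

lemma fAux_continuous (F : Filter ℕ) {Fs : Set ℕ} (hFs : Fs ∈ F) {L : Type*} (κ : Set L) :
    @Continuous _ _ (prodTopL F L) ⊥ (fAux Fs κ) := by
  letI tn : TopologicalSpace (Option ℕ) := nfTop F
  letI tl : TopologicalSpace (Option L) := ⊥
  haveI : DiscreteTopology (Option L) := ⟨rfl⟩
  have hprod : prodTopL F L = @instTopologicalSpaceProd (Option ℕ) (Option L) tn tl := rfl
  rw [hprod]
  rw [continuous_def]
  intro s _
  rw [← Set.biUnion_preimage_singleton]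
  apply isOpen_biUnion
  rintro (_ | ⟨u, v⟩) -
  · -- preimage of {none}
    have hpre : fAux Fs κ ⁻¹' {none} =
        (Set.univ ×ˢ (some '' κᶜ)ᶜ) ∪ (((some '' Fsᶜ)ᶜ : Set (Option ℕ)) ×ˢ Set.univ) := by
      ext ⟨x, y⟩
      simp only [Set.mem_preimage, Set.mem_singleton_iff, Set.mem_union, Set.mem_prod,
        Set.mem_univ, true_and, and_true, Set.mem_compl_iff, Set.mem_image]
      constructor
      · intro h
        rcases x with _ | n
        · right; rintro ⟨m, -, hm⟩; exact absurd hm (by simp)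
        · rcases y with _ | a
          · left; rintro ⟨b, -, hb⟩; exact absurd hb (by simp)
          · rw [fAux_some_some] at h
            by_cases hc : n ∈ Fsᶜ ∧ a ∉ κ
            · rw [dif_pos hc] at h; exact absurd h (by simp)
            · by_cases hn : n ∈ Fsᶜ
              · have ha : a ∈ κ := by by_contra ha; exact hc ⟨hn, ha⟩
                left; rintro ⟨b, hb, hba⟩
                exact hb (by rw [Option.some_injective _ hba]; exact ha)
              · right; rintro ⟨m, hm, hmn⟩
                exact hn (by rwa [Option.some_injective _ hmn] at hm)
      · intro h
        rcases x with _ | n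
        · rw [fAux_fst_none]
        · rcases y with _ | a
          · rw [fAux_snd_none]
          · rw [fAux_some_some]
            rcases h with h | h
            · have ha : a ∈ κ := by
                by_contra ha; exact h ⟨a, ha, rfl⟩
              rw [dif_neg (by tauto)]
            · have hn : n ∉ Fsᶜ := fun hn => h ⟨n, hn, rfl⟩
              rw [dif_neg (by tauto)]
    rw [hpre]
    apply IsOpen.union
    · exact isOpen_univ.prod (isOpen_discrete _)
    · refine IsOpen.prod ?_ isOpen_univ
      show (nfTop F).IsOpen _
      intro _
      refine Filter.mem_of_superset hFs fun n hn => ?_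
      rintro ⟨m, hm, hmn⟩
      exact hm (by rwa [Option.some_injective _ hmn])
  · -- preimage of {some (u, v)}
    have hpre : fAux Fs κ ⁻¹' {some (u, v)} = {some u.1} ×ˢ {some v.1} := by
      ext ⟨x, y⟩
      simp only [Set.mem_preimage, Set.mem_singleton_iff, Set.mem_prod]
      constructor
      · intro h
        rcases x with _ | n
        · rw [fAux_fst_none] at h; exact absurd h (by simp)
        · rcases y with _ | a
          · rw [fAux_snd_none] at h; exact absurd h (by simp)
          · rw [fAux_some_some] at h
            by_cases hc : n ∈ Fsᶜ ∧ a ∉ κ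
            · rw [dif_pos hc] at h
              have h' := Option.some_injective _ h
              exact ⟨congrArg some (congrArg Subtype.val (congrArg Prod.fst h')),
                congrArg some (congrArg Subtype.val (congrArg Prod.snd h'))⟩
            · rw [dif_neg hc] at h; exact absurd h (by simp)
      · rintro ⟨h1, h2⟩
        rcases x with _ | n
        · exact absurd h1 (by simp)
        · rcases y with _ | a
          · exact absurd h2 (by simp)
          · have hn : n = u.1 := Option.some_injective _ h1
            have ha : a = v.1 := Option.some_injective _ h2
            subst hn; subst ha
            rw [fAux_some_some, dif_pos ⟨u.2, v.2⟩]
    rw [hpre]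
    refine IsOpen.prod ?_ (isOpen_discrete _)
    exact st18_nfTop_isOpen_of_not_none F (by simp)

end St18C
section St18D
open Classical

abbrev St18T (Fs : Set ℕ) (L : Type*) (κ : Set L) :=
  Option ({n : ℕ // n ∈ Fsᶜ} × {a : L // a ∉ κ})

variable {L : Type*} (Fs : Set ℕ) (κ : Set L) (a₀ : {a : L // a ∉ κ})

def st18tY : TopologicalSpace (Option (St18T Fs L κ)) where
  IsOpen U := none ∈ U → ∃ k, ∀ n (hn : n ∈ Fsᶜ), k ≤ n → some (some (⟨n, hn⟩, a₀)) ∈ U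
  isOpen_univ := fun _ => ⟨0, fun _ _ _ => Set.mem_univ _⟩
  isOpen_inter := fun U V hU hV h => by
    obtain ⟨k1, h1⟩ := hU h.1
    obtain ⟨k2, h2⟩ := hV h.2
    exact ⟨max k1 k2, fun n hn hk =>
      ⟨h1 n hn (le_trans (le_max_left _ _) hk), h2 n hn (le_trans (le_max_right _ _) hk)⟩⟩
  isOpen_sUnion := fun S hS h => by
    obtain ⟨U, hUS, hnU⟩ := h
    obtain ⟨k, hk⟩ := hS U hUS hnU
    exact ⟨k, fun n hn hkn => ⟨U, hUS, hk n hn hkn⟩⟩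

noncomputable def st18opY :
    Option (St18T Fs L κ) → Option (St18T Fs L κ) → Option (St18T Fs L κ)
  | some t, some t' => some (osOp Fs κ t t')
  | none, none => none
  | none, some (some p) => if p.2 = a₀ then none else some none
  | some (some p), none => if p.2 = a₀ then none else some none
  | none, some none => some none
  | some none, none => some none

noncomputable def st18w : St18T Fs L κ → Option (St18T Fs L κ)
  | some p => if p.2 = a₀ then none else some none
  | none => some none

variable {Fs κ a₀}

lemma st18opY_none_some (t) : st18opY Fs κ a₀ none (some t) = st18w Fs κ a₀ t := by
  cases t <;> rfl

lemma st18opY_some_none (t) : st18opY Fs κ a₀ (some t) none = st18w Fs κ a₀ t := by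
  cases t <;> rfl

lemma st18opY_some_some (t t') :
    st18opY Fs κ a₀ (some t) (some t') = some (osOp Fs κ t t') := by
  cases t <;> cases t' <;> rfl

lemma st18opY_none_none : st18opY Fs κ a₀ none none = none := rfl

lemma st18opY_comm (x y) : st18opY Fs κ a₀ x y = st18opY Fs κ a₀ y x := by
  rcases x with _ | t <;> rcases y with _ | t'
  · rfl
  · rw [st18opY_none_some, st18opY_some_none]
  · rw [st18opY_some_none, st18opY_none_some]
  · rw [st18opY_some_some, st18opY_some_some, osOp_comm]

lemma st18opY_idem (x) : st18opY Fs κ a₀ x x = x := by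
  rcases x with _ | t
  · rfl
  · rw [st18opY_some_some, osOp_idem]

lemma st18wA (t) : st18opY Fs κ a₀ none (st18w Fs κ a₀ t) = st18w Fs κ a₀ t := by
  rcases t with _ | p
  · rfl
  · by_cases h : p.2 = a₀ <;> simp only [st18w, if_pos, if_neg, h, ite_true, ite_false] <;> rfl

lemma st18wA' (t) : st18opY Fs κ a₀ (st18w Fs κ a₀ t) none = st18w Fs κ a₀ t := by
  rw [st18opY_comm, st18wA]

lemma st18wB (t t') :
    st18opY Fs κ a₀ (st18w Fs κ a₀ t) (some t') = st18w Fs κ a₀ (osOp Fs κ t t') := by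
  rcases t with _ | p
  · show st18opY Fs κ a₀ (some none) (some t') = _
    rw [st18opY_some_some, osOp_none_left]
    rfl
  · by_cases h : p.2 = a₀
    · have hw : st18w Fs κ a₀ (some p) = none := by simp [st18w, h]
      rw [hw, st18opY_none_some]
      rcases t' with _ | q
      · rw [osOp_none_right]
      · rw [osOp_some_some]
        by_cases h2 : p.2 = q.2
        · rw [if_pos h2]
          show st18w Fs κ a₀ (some q) = st18w Fs κ a₀ (some (_, p.2))
          simp [st18w, ← h2]
        · rw [if_neg h2]
          show st18w Fs κ a₀ (some q) = st18w Fs κ a₀ none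
          have hq : q.2 ≠ a₀ := fun hh => h2 (h.trans hh.symm)
          simp [st18w, hq]
    · have hw : st18w Fs κ a₀ (some p) = some none := by simp [st18w, h]
      rw [hw, st18opY_some_some, osOp_none_left]
      rcases t' with _ | q
      · rw [osOp_none_right]
        rfl
      · rw [osOp_some_some]
        by_cases h2 : p.2 = q.2
        · rw [if_pos h2]
          show some none = st18w Fs κ a₀ (some (_, p.2))
          simp [st18w, h]
        · rw [if_neg h2]
          rfl

lemma st18wB' (t t') :
    st18opY Fs κ a₀ (some t) (st18w Fs κ a₀ t') = st18w Fs κ a₀ (osOp Fs κ t t') := by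
  rw [st18opY_comm, st18wB, osOp_comm]

lemma st18opY_assoc (x y z) :
    st18opY Fs κ a₀ (st18opY Fs κ a₀ x y) z = st18opY Fs κ a₀ x (st18opY Fs κ a₀ y z) := by
  rcases x with _ | t
  · rcases y with _ | t'
    · rcases z with _ | t''
      · rfl
      · rw [st18opY_none_none, st18opY_none_some, st18wA]
    · rcases z with _ | t''
      · rw [st18opY_none_some, st18opY_some_none, st18wA', st18wA]
      · rw [st18opY_none_some, st18opY_some_some, st18opY_none_some, st18wB]
  · rcases y with _ | t'
    · rcases z with _ | t''
      · rw [st18opY_some_none, st18opY_none_none, st18wA', st18opY_some_none]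
      · rw [st18opY_some_none, st18opY_none_some, st18wB, st18wB']
    · rcases z with _ | t''
      · rw [st18opY_some_some, st18opY_some_none, st18opY_some_none, st18wB']
      · rw [st18opY_some_some, st18opY_some_some, st18opY_some_some, st18opY_some_some,
          osOp_assoc]

lemma st18tY_isOpen_not_none {U : Set (Option (St18T Fs L κ))} (h : none ∉ U) :
    (st18tY Fs κ a₀).IsOpen U := fun hU => absurd hU h

lemma st18tY_isOpen_compl_singleton (t : St18T Fs L κ) :
    (st18tY Fs κ a₀).IsOpen {some t}ᶜ := by
  intro _
  rcases t with _ | p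
  · exact ⟨0, fun n hn _ h => by simp at h⟩
  · refine ⟨p.1.1 + 1, fun n hn hkn h => ?_⟩
    have h1 : (⟨n, hn⟩, a₀) = p := Option.some_injective _ (Option.some_injective _ h)
    have : p.1.1 = n := by rw [← h1]
    omega

lemma st18tY_t2 : @T2Space _ (st18tY Fs κ a₀) := by
  letI := st18tY Fs κ a₀
  constructor
  intro x y hxy
  rcases x with _ | t
  · rcases y with _ | t'
    · exact absurd rfl hxy
    · exact ⟨{some t'}ᶜ, {some t'}, st18tY_isOpen_compl_singleton t',
        st18tY_isOpen_not_none (by simp), by simp, rfl, disjoint_compl_left⟩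
  · rcases y with _ | t'
    · exact ⟨{some t}, {some t}ᶜ, st18tY_isOpen_not_none (by simp),
        st18tY_isOpen_compl_singleton t, rfl, by simp, disjoint_compl_right⟩
    · refine ⟨{some t}, {some t'}, st18tY_isOpen_not_none (by simp),
        st18tY_isOpen_not_none (by simp), rfl, rfl, ?_⟩
      rw [Set.disjoint_singleton]
      exact hxy

variable (Fs κ a₀) in
def st18V (k : ℕ) : Set (Option (St18T Fs L κ)) :=
  insert none {y | ∃ n, ∃ hn : n ∈ Fsᶜ, k ≤ n ∧ y = some (some (⟨n, hn⟩, a₀))}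

lemma st18V_isOpen (k : ℕ) : (st18tY Fs κ a₀).IsOpen (st18V Fs κ a₀ k) :=
  fun _ => ⟨k, fun n hn h => Set.mem_insert_of_mem _ ⟨n, hn, h, rfl⟩⟩

lemma st18V_mem_none (k : ℕ) : none ∈ st18V Fs κ a₀ k := Set.mem_insert _ _

end St18D
section St18E
open Classical

variable {L : Type*} {Fs : Set ℕ} {κ : Set L} {a₀ : {a : L // a ∉ κ}}

lemma st18w_a₀ (n : ℕ) (hn : n ∈ Fsᶜ) :
    st18w Fs κ a₀ (some (⟨n, hn⟩, a₀)) = none := by simp [st18w]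

lemma st18opY_continuous :
    @Continuous _ _ (@instTopologicalSpaceProd _ _ (st18tY Fs κ a₀) (st18tY Fs κ a₀))
      (st18tY Fs κ a₀) (fun p => st18opY Fs κ a₀ p.1 p.2) := by
  letI := st18tY Fs κ a₀
  rw [continuous_def]
  intro U hU
  rw [isOpen_prod_iff]
  intro y₁ y₂ hmem
  rw [Set.mem_preimage] at hmem
  rcases y₁ with _ | t₁
  · rcases y₂ with _ | t₂
    · -- (ω, ω)
      rw [st18opY_none_none] at hmem
      obtain ⟨k, hk⟩ := hU hmem
      refine ⟨st18V Fs κ a₀ k, st18V Fs κ a₀ k, st18V_isOpen k, st18V_isOpen k,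
        st18V_mem_none k, st18V_mem_none k, ?_⟩
      rintro ⟨a, b⟩ ⟨ha, hb⟩
      show st18opY Fs κ a₀ a b ∈ U
      rcases Set.mem_insert_iff.mp ha with rfl | ⟨n, hn, hkn, rfl⟩
      · rcases Set.mem_insert_iff.mp hb with rfl | ⟨m, hm, hkm, rfl⟩
        · rw [st18opY_none_none]; exact hmem
        · rw [st18opY_none_some, st18w_a₀]; exact hmem
      · rcases Set.mem_insert_iff.mp hb with rfl | ⟨m, hm, hkm, rfl⟩
        · rw [st18opY_some_none, st18w_a₀]; exact hmem
        · rw [st18opY_some_some, osOp_some_some, if_pos rfl]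
          exact hk (max n m) (st18_max_mem hn hm) (le_trans hkn (le_max_left _ _))
    · -- (ω, some t₂)
      rcases t₂ with _ | p
      · refine ⟨st18V Fs κ a₀ 0, {some none}, st18V_isOpen 0,
          st18tY_isOpen_not_none (by simp), st18V_mem_none 0, rfl, ?_⟩
        rintro ⟨a, b⟩ ⟨ha, hb⟩
        show st18opY Fs κ a₀ a b ∈ U
        have hb' : b = some none := hb
        rcases Set.mem_insert_iff.mp ha with rfl | ⟨n, hn, -, rfl⟩
        · rw [hb']; exact hmem
        · rw [hb', st18opY_some_some, osOp_none_right]; exact hmem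
      · by_cases hp : p.2 = a₀
        · have hm0 : st18opY Fs κ a₀ none (some (some p)) = none := by
            rw [st18opY_none_some]; simp [st18w, hp]
          rw [hm0] at hmem
          obtain ⟨k, hk⟩ := hU hmem
          refine ⟨st18V Fs κ a₀ k, {some (some p)}, st18V_isOpen k,
            st18tY_isOpen_not_none (by simp), st18V_mem_none k, rfl, ?_⟩
          rintro ⟨a, b⟩ ⟨ha, hb⟩
          show st18opY Fs κ a₀ a b ∈ U
          have hb' : b = some (some p) := hb
          rcases Set.mem_insert_iff.mp ha with rfl | ⟨n, hn, hkn, rfl⟩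
          · rw [hb', hm0]; exact hmem
          · rw [hb', st18opY_some_some, osOp_some_some, if_pos hp.symm]
            have := hk (max n p.1.1) (st18_max_mem hn p.1.2) (le_trans hkn (le_max_left _ _))
            convert this using 4
          -- label is a₀
        · have hm0 : st18opY Fs κ a₀ none (some (some p)) = some none := by
            rw [st18opY_none_some]; simp [st18w, hp]
          rw [hm0] at hmem
          refine ⟨st18V Fs κ a₀ 0, {some (some p)}, st18V_isOpen 0,
            st18tY_isOpen_not_none (by simp), st18V_mem_none 0, rfl, ?_⟩
          rintro ⟨a, b⟩ ⟨ha, hb⟩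
          show st18opY Fs κ a₀ a b ∈ U
          have hb' : b = some (some p) := hb
          rcases Set.mem_insert_iff.mp ha with rfl | ⟨n, hn, -, rfl⟩
          · rw [hb', hm0]; exact hmem
          · rw [hb', st18opY_some_some, osOp_some_some,
              if_neg (fun hh => hp hh.symm)]
            exact hmem
  · rcases y₂ with _ | t₂
    · -- (some t₁, ω)
      rcases t₁ with _ | p
      · refine ⟨{some none}, st18V Fs κ a₀ 0, st18tY_isOpen_not_none (by simp),
          st18V_isOpen 0, rfl, st18V_mem_none 0, ?_⟩
        rintro ⟨a, b⟩ ⟨ha, hb⟩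
        show st18opY Fs κ a₀ a b ∈ U
        have ha' : a = some none := ha
        rcases Set.mem_insert_iff.mp hb with rfl | ⟨m, hm, -, rfl⟩
        · rw [ha']; exact hmem
        · rw [ha', st18opY_some_some, osOp_none_left]; exact hmem
      · by_cases hp : p.2 = a₀
        · have hm0 : st18opY Fs κ a₀ (some (some p)) none = none := by
            rw [st18opY_some_none]; simp [st18w, hp]
          rw [hm0] at hmem
          obtain ⟨k, hk⟩ := hU hmem
          refine ⟨{some (some p)}, st18V Fs κ a₀ k,
            st18tY_isOpen_not_none (by simp), st18V_isOpen k, rfl, st18V_mem_none k, ?_⟩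
          rintro ⟨a, b⟩ ⟨ha, hb⟩
          show st18opY Fs κ a₀ a b ∈ U
          have ha' : a = some (some p) := ha
          rcases Set.mem_insert_iff.mp hb with rfl | ⟨m, hm, hkm, rfl⟩
          · rw [ha', hm0]; exact hmem
          · rw [ha', st18opY_some_some, osOp_some_some, if_pos hp]
            have := hk (max p.1.1 m) (st18_max_mem p.1.2 hm) (le_trans hkm (le_max_right _ _))
            convert this using 4
        · have hm0 : st18opY Fs κ a₀ (some (some p)) none = some none := by
            rw [st18opY_some_none]; simp [st18w, hp]
          rw [hm0] at hmem
          refine ⟨{some (some p)}, st18V Fs κ a₀ 0,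
            st18tY_isOpen_not_none (by simp), st18V_isOpen 0, rfl, st18V_mem_none 0, ?_⟩
          rintro ⟨a, b⟩ ⟨ha, hb⟩
          show st18opY Fs κ a₀ a b ∈ U
          have ha' : a = some (some p) := ha
          rcases Set.mem_insert_iff.mp hb with rfl | ⟨m, hm, -, rfl⟩
          · rw [ha', hm0]; exact hmem
          · rw [ha', st18opY_some_some, osOp_some_some, if_neg hp]
            exact hmem
    · -- (some t₁, some t₂)
      refine ⟨{some t₁}, {some t₂}, st18tY_isOpen_not_none (by simp),
        st18tY_isOpen_not_none (by simp), rfl, rfl, ?_⟩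
      rintro ⟨a, b⟩ ⟨ha, hb⟩
      show st18opY Fs κ a₀ a b ∈ U
      have ha' : a = some t₁ := ha
      have hb' : b = some t₂ := hb
      rw [ha', hb']
      exact hmem

end St18E

section St18F
open Classical

universe u in
lemma st18_not_HComplete (Fs : Set ℕ) (hinf : Fsᶜ.Infinite) {L : Type} (κ : Set L)
    (a₀ : {a : L // a ∉ κ}) :
    ¬ @HComplete.{0, u} (Option ({n : ℕ // n ∈ Fsᶜ} × {a : L // a ∉ κ})) ⊥ (osOp Fs κ) := by
  intro h
  letI tX := st18tY Fs κ a₀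
  haveI hT2 : @T2Space (Option (St18T Fs L κ)) tX := st18tY_t2
  letI tZ : TopologicalSpace (ULift.{u} (Option (St18T Fs L κ))) := tX.induced ULift.down
  set opZ : ULift.{u} (Option (St18T Fs L κ)) → ULift.{u} (Option (St18T Fs L κ)) →
      ULift.{u} (Option (St18T Fs L κ)) :=
    fun a b => ULift.up (st18opY Fs κ a₀ a.down b.down) with hopZ
  have cont_down : Continuous (ULift.down : ULift.{u} (Option (St18T Fs L κ)) →
      Option (St18T Fs L κ)) := continuous_induced_dom
  have cont_up : Continuous (ULift.up : Option (St18T Fs L κ) →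
      ULift.{u} (Option (St18T Fs L κ))) := continuous_induced_rng.mpr continuous_id
  have hts : IsTopSemilattice (ULift.{u} (Option (St18T Fs L κ))) opZ := by
    refine ⟨?_, ?_, ?_, ?_, ?_⟩
    · constructor
      intro x y hxy
      have hd : x.down ≠ y.down := fun hd => hxy (by cases x; cases y; cases hd; rfl)
      obtain ⟨uu, vv, hu, hv, hxu, hyv, huv⟩ := t2_separation hd
      exact ⟨ULift.down ⁻¹' uu, ULift.down ⁻¹' vv, hu.preimage cont_down,
        hv.preimage cont_down, hxu, hyv, huv.preimage _⟩
    · exact fun a b => congrArg ULift.up (st18opY_comm _ _)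
    · intro a
      show ULift.up (st18opY Fs κ a₀ a.down a.down) = a
      rw [st18opY_idem]
    · exact fun a b c => congrArg ULift.up (st18opY_assoc _ _ _)
    · have h1 : Continuous fun p : ULift.{u} (Option (St18T Fs L κ)) ×
          ULift.{u} (Option (St18T Fs L κ)) => st18opY Fs κ a₀ p.1.down p.2.down :=
        st18opY_continuous.comp
          ((cont_down.comp continuous_fst).prodMk (cont_down.comp continuous_snd))
      exact cont_up.comp h1
  have hind : (⊥ : TopologicalSpace (St18T Fs L κ)) =
      tX.induced (some : St18T Fs L κ → Option (St18T Fs L κ)) := by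
    refine le_antisymm bot_le ?_
    intro s _
    exact ⟨some '' s, st18tY_isOpen_not_none (by simp),
      Set.preimage_image_eq _ (Option.some_injective _)⟩
  set f : St18T Fs L κ → ULift.{u} (Option (St18T Fs L κ)) :=
    fun t => ULift.up (some t) with hf
  have hemb : @Topology.IsEmbedding _ _ ⊥ tZ f :=
    @Topology.IsEmbedding.mk _ _ ⊥ tZ f
      (@Topology.IsInducing.mk _ _ ⊥ tZ f (by rw [induced_compose]; exact hind))
      (fun a b hh => Option.some_injective _ (congrArg ULift.down hh))
  have hhom : ∀ a b, f (osOp Fs κ a b) = opZ (f a) (f b) := by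
    intro a b
    show ULift.up (some (osOp Fs κ a b)) = ULift.up (st18opY Fs κ a₀ (some a) (some b))
    rw [st18opY_some_some]
  have hcl := h (ULift.{u} (Option (St18T Fs L κ))) opZ hts f hemb hhom
  have hrange : Set.range f = ULift.down ⁻¹'
      (Set.range (some : St18T Fs L κ → Option (St18T Fs L κ))) := by
    ext z
    constructor
    · rintro ⟨t, rfl⟩; exact ⟨t, rfl⟩
    · rintro ⟨t, ht⟩; exact ⟨t, by cases z; cases ht; rfl⟩
  rw [hrange] at hcl
  have hclX : IsClosed (Set.range (some : St18T Fs L κ → Option (St18T Fs L κ))) :=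
    hcl.preimage cont_up
  have hopen : IsOpen (Set.range (some : St18T Fs L κ → Option (St18T Fs L κ)))ᶜ :=
    hclX.isOpen_compl
  rw [Set.compl_range_some] at hopen
  obtain ⟨k, hk⟩ := hopen rfl
  obtain ⟨n, hn, hkn⟩ := hinf.exists_gt k
  exact absurd (hk n hn hkn.le) (by simp)

end St18F

/-- the Rees quotient E/I_κ is topologically isomorphic to the orthogonal
sum of λ-many copies of the discrete semilattice (ℕ, max) with an isolated zero adjoined,
i.e. to the discrete semilattice on {0} ∪ ((ℕ \ F) × (λ \ κ)) with
(n,a)·(m,a) = (max(n,m),a) and (n,a)·(m,b) = 0 for a ≠ b; this discrete semilattice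
is not 𝓗-complete. -/
theorem reesQuotientL_iso_orthogonal_sum (F : Filter ℕ) (hF : FreeF F)
    (Fs : Set ℕ) (hFs : Fs ∈ F) (hinf : Fsᶜ.Infinite) (L : Type) [Infinite L]
    (κ : Set L) (hκ : κ ≠ Set.univ)
    (hsub : ∀ p ∈ EsetL Fs L, ∀ q ∈ EsetL Fs L, pOpL p q ∈ EsetL Fs L) :
    (∃ opQ : Quotient (reesSetoidL Fs κ) → Quotient (reesSetoidL Fs κ) →
        Quotient (reesSetoidL Fs κ),
      (∀ a b : EsetL Fs L,
        opQ (Quotient.mk (reesSetoidL Fs κ) a) (Quotient.mk (reesSetoidL Fs κ) b) =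
          Quotient.mk (reesSetoidL Fs κ) ⟨pOpL a.1 b.1, hsub a.1 a.2 b.1 b.2⟩) ∧
      ∃ e : Quotient (reesSetoidL Fs κ) ≃ Option ({n : ℕ // n ∈ Fsᶜ} × {a : L // a ∉ κ}),
        @Continuous _ _ (qTopL F Fs κ) ⊥ e ∧
        @Continuous _ _ ⊥ (qTopL F Fs κ) e.symm ∧
        ∀ x y, e (opQ x y) = osOp Fs κ (e x) (e y)) ∧
    ¬ @HComplete (Option ({n : ℕ // n ∈ Fsᶜ} × {a : L // a ∉ κ})) ⊥ (osOp Fs κ) := by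
  obtain ⟨a0, ha0⟩ := (Set.ne_univ_iff_exists_notMem κ).mp hκ
  constructor
  · -- the Rees quotient part
    refine ⟨fun x y => Quotient.liftOn₂ x y
        (fun a b => Quotient.mk (reesSetoidL Fs κ) ⟨pOpL a.1 b.1, hsub a.1 a.2 b.1 b.2⟩)
        ?_, fun a b => rfl, ?_⟩
    · -- well-definedness
      intro a₁ b₁ a₂ b₂ h1 h2
      have h1' : a₁ = a₂ ∨ ((a₁ : Option ℕ × Option L) ∈ IsetL Fs κ ∧
          (a₂ : Option ℕ × Option L) ∈ IsetL Fs κ) := h1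
      have h2' : b₁ = b₂ ∨ ((b₁ : Option ℕ × Option L) ∈ IsetL Fs κ ∧
          (b₂ : Option ℕ × Option L) ∈ IsetL Fs κ) := h2
      rcases h1' with rfl | ⟨hI1, hI2⟩
      · rcases h2' with rfl | ⟨hJ1, hJ2⟩
        · rfl
        · exact Quotient.sound (Or.inr ⟨st18_pOpL_mem_I' a₁.2 hJ1, st18_pOpL_mem_I' a₁.2 hJ2⟩)
      · exact Quotient.sound (Or.inr ⟨st18_pOpL_mem_I b₁.2 hI1, st18_pOpL_mem_I b₂.2 hI2⟩)
    · -- the topological isomorphism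
      have hresp : ∀ a b : EsetL Fs L, (reesSetoidL Fs κ).r a b →
          fAux Fs κ a.1 = fAux Fs κ b.1 := by
        intro a b hab
        rcases hab with rfl | ⟨h1, h2⟩
        · rfl
        · rw [(fAux_eq_none_iff a.2).mpr h1, (fAux_eq_none_iff b.2).mpr h2]
      let eto : Quotient (reesSetoidL Fs κ) → Option ({n : ℕ // n ∈ Fsᶜ} × {a : L // a ∉ κ}) :=
        Quotient.lift (fun p : EsetL Fs L => fAux Fs κ p.1) hresp
      let einv : Option ({n : ℕ // n ∈ Fsᶜ} × {a : L // a ∉ κ}) →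
          Quotient (reesSetoidL Fs κ) := fun x =>
        match x with
        | none => Quotient.mk (reesSetoidL Fs κ)
            ⟨(none, none), Or.inl ⟨Set.mem_univ _, rfl⟩⟩
        | some uv => Quotient.mk (reesSetoidL Fs κ)
            ⟨(some uv.1.1, some uv.2.1),
              Or.inr ⟨⟨uv.1.1, uv.1.2, rfl⟩, ⟨uv.2.1, Set.mem_univ _, rfl⟩⟩⟩
      have hleft : ∀ q, einv (eto q) = q := by
        refine Quotient.ind (fun p => ?_)
        by_cases hIp : (p : Option ℕ × Option L) ∈ IsetL Fs κ
        · have h0 : eto (Quotient.mk (reesSetoidL Fs κ) p) = none :=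
            (fAux_eq_none_iff p.2).mpr hIp
          rw [h0]
          exact Quotient.sound (Or.inr ⟨Or.inl ⟨Set.mem_univ _, rfl⟩, hIp⟩)
        · rcases st18_mem_E_cases p.2 with hnone | ⟨n, a, hn, hp1⟩
          · exact absurd (st18_mem_I_snd_none hnone) hIp
          · have ha : a ∉ κ := fun ha => hIp (by rw [hp1]; exact st18_mem_I_some hn ha)
            have h0 : eto (Quotient.mk (reesSetoidL Fs κ) p) = some (⟨n, hn⟩, ⟨a, ha⟩) := by
              show fAux Fs κ (p : Option ℕ × Option L) = _
              rw [hp1, fAux_some_some, dif_pos ⟨hn, ha⟩]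
            rw [h0]
            exact Quotient.sound (Or.inl (Subtype.ext hp1.symm))
      have hright : ∀ x, eto (einv x) = x := by
        rintro (_ | ⟨u, v⟩)
        · show fAux Fs κ ((none : Option ℕ), (none : Option L)) = none
          exact fAux_fst_none none
        · show fAux Fs κ (some u.1, some v.1) = some (u, v)
          rw [fAux_some_some, dif_pos ⟨u.2, v.2⟩]
      refine ⟨⟨eto, einv, hleft, hright⟩, ?_, continuous_bot, ?_⟩
      · -- continuity of e
        show @Continuous _ _ ((subTopL F Fs L).coinduced (Quotient.mk (reesSetoidL Fs κ))) ⊥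
          (Quotient.lift (fun p : EsetL Fs L => fAux Fs κ p.1) hresp)
        refine (@continuous_coinduced_dom _ _ _
          (Quotient.mk (reesSetoidL Fs κ))
          (Quotient.lift (fun p : EsetL Fs L => fAux Fs κ p.1) hresp)
          (subTopL F Fs L) ⊥).mpr ?_
        letI : TopologicalSpace (Option ℕ × Option L) := prodTopL F L
        have h1 : @Continuous _ _ (subTopL F Fs L) (prodTopL F L)
            (Subtype.val : EsetL Fs L → Option ℕ × Option L) := continuous_subtype_val
        exact @Continuous.comp _ _ _ (subTopL F Fs L) (prodTopL F L) ⊥ _ _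
          (fAux_continuous F hFs κ) h1
      · -- semilattice homomorphism
        intro x y
        refine Quotient.inductionOn₂ x y fun a b => ?_
        show fAux Fs κ (pOpL a.1 b.1) = osOp Fs κ (fAux Fs κ a.1) (fAux Fs κ b.1)
        exact fAux_hom a.2 b.2
  · exact st18_not_HComplete Fs hinf κ ⟨a0, ha0⟩
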